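/- There exists a constant C > 0 such that the following holds. For every finite connected simple graph G on n ≥ 2 vertices and every β ∈ (0,1), there exists a probability distribution (a PMF) γ over partitions of the vertex set of G such that: (i) for every partition in the support of γ, every block has weak diameter at most C·β⁻¹·(log n)² in G (i.e., any two vertices in the same block have shortest-path distance at most C·β⁻¹·(log n)² in G); and (ii) for every edge (u,v) of G, the probability (over γ) that u and v lie in different blocks is at most β. -/

import Mathlib

open Finset

namespace LDDaux

/-! ### Truncated geometric weights -/

/-- Truncated geometric weight on `{0, ..., R}` (as a function of `ℕ`). -/
noncomputable def gw' (p : ℝ) (R : ℕ) (j : ℕ) : ℝ :=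
  if j < R then p * (1 - p) ^ j else (1 - p) ^ R

lemma gw'_nonneg {p : ℝ} (hp0 : 0 ≤ p) (hp1 : p ≤ 1) (R j : ℕ) : 0 ≤ gw' p R j := by
  have h : (0:ℝ) ≤ 1 - p := by linarith
  unfold gw'
  split
  · exact mul_nonneg hp0 (pow_nonneg h _)
  · exact pow_nonneg h _

lemma sum_gw'_head {p : ℝ} (hp0 : p ≠ 0) {R t : ℕ} (ht : t ≤ R) :
    ∑ j ∈ range t, gw' p R j = 1 - (1 - p) ^ t := by
  have h1 : ∀ j ∈ range t, gw' p R j = p * (1 - p) ^ j := by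
    intro j hj
    exact if_pos (lt_of_lt_of_le (mem_range.1 hj) ht)
  have hne : (1 : ℝ) - p ≠ 1 := by
    intro h; apply hp0; linarith
  rw [Finset.sum_congr rfl h1, ← Finset.mul_sum, geom_sum_eq hne]
  have h2 : (1:ℝ) - p - 1 = -p := by ring
  rw [h2, mul_div_assoc']
  rw [div_eq_iff (neg_ne_zero.2 hp0)]
  ring

lemma sum_gw_lt {p : ℝ} (hp0 : p ≠ 0) {R t : ℕ} (ht : t ≤ R) :
    ∑ x ∈ univ.filter (fun x : Fin (R+1) => (x:ℕ) < t), gw' p R (x:ℕ)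
      = 1 - (1 - p) ^ t := by
  rw [Finset.sum_filter]
  rw [Fin.sum_univ_eq_sum_range (fun j => if j < t then gw' p R j else 0) (R+1)]
  rw [← Finset.sum_filter]
  have h : (range (R+1)).filter (fun j => j < t) = range t := by
    ext j; simp only [mem_filter, mem_range]; omega
  rw [h]
  exact sum_gw'_head hp0 ht

lemma sum_gw_total {p : ℝ} (hp0 : p ≠ 0) (R : ℕ) :
    ∑ x : Fin (R+1), gw' p R (x:ℕ) = 1 := by
  rw [Fin.sum_univ_eq_sum_range (fun j => gw' p R j) (R+1)]
  rw [Finset.sum_range_succ, sum_gw'_head hp0 (le_refl R)]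
  have h : gw' p R R = (1 - p) ^ R := if_neg (lt_irrefl R)
  rw [h]; ring

lemma sum_gw_ge {p : ℝ} (hp0 : p ≠ 0) {R t : ℕ} (ht : t ≤ R) :
    ∑ x ∈ univ.filter (fun x : Fin (R+1) => ¬ ((x:ℕ) < t)), gw' p R (x:ℕ)
      = (1 - p) ^ t := by
  have h := Finset.sum_filter_add_sum_filter_not univ
    (fun x : Fin (R+1) => (x:ℕ) < t) (fun x => gw' p R (x:ℕ))
  rw [sum_gw_lt hp0 ht, sum_gw_total hp0 R] at h
  linarith

lemma sum_gw_eq (p : ℝ) {R t : ℕ} (ht : t ≤ R) :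
    ∑ x ∈ univ.filter (fun x : Fin (R+1) => (x:ℕ) = t), gw' p R (x:ℕ)
      = gw' p R t := by
  have h : univ.filter (fun x : Fin (R+1) => (x:ℕ) = t) = {⟨t, by omega⟩} := by
    ext x
    simp only [mem_filter, mem_univ, true_and, mem_singleton, Fin.ext_iff]
  rw [h, Finset.sum_singleton]

lemma sum_gw_eq_empty (p : ℝ) {R t : ℕ} (ht : R < t) :
    ∑ x ∈ univ.filter (fun x : Fin (R+1) => (x:ℕ) = t), gw' p R (x:ℕ) = 0 := by
  have h : univ.filter (fun x : Fin (R+1) => (x:ℕ) = t) = ∅ := by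
    ext x
    simp only [mem_filter, mem_univ, true_and, Finset.notMem_empty, iff_false]
    have := x.isLt; omega
  rw [h, Finset.sum_empty]

/-! ### The clustering construction -/

variable {V : Type} [Fintype V] [DecidableEq V]

/-- A fixed enumeration of the vertices. -/
noncomputable def ord (V : Type) [Fintype V] : V ≃ Fin (Fintype.card V) :=
  Fintype.equivFin V

variable (G : SimpleGraph V)

/-- The set of indices of candidate centers capturing `w`. -/
noncomputable def winIdx (R : ℕ) (f : V → Fin (R+1)) (w : V) :
    Finset (Fin (Fintype.card V)) :=
  univ.filter (fun k => G.dist ((ord V).symm k) w ≤ ((f ((ord V).symm k)) : ℕ))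

lemma winIdx_nonempty (R : ℕ) (f : V → Fin (R+1)) (w : V) :
    (winIdx G R f w).Nonempty := by
  refine ⟨ord V w, ?_⟩
  simp [winIdx, SimpleGraph.dist_self]

/-- The cluster center of `w`: the first vertex in the enumeration whose random
ball contains `w`. -/
noncomputable def winner (R : ℕ) (f : V → Fin (R+1)) (w : V) : V :=
  (ord V).symm ((winIdx G R f w).min' (winIdx_nonempty G R f w))

lemma winner_eq {R : ℕ} {f : V → Fin (R+1)} {w : V} (k : Fin (Fintype.card V))
    (hk : G.dist ((ord V).symm k) w ≤ (f ((ord V).symm k) : ℕ))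
    (hmin : ∀ j : Fin (Fintype.card V), j < k →
      ¬ (G.dist ((ord V).symm j) w ≤ (f ((ord V).symm j) : ℕ))) :
    winner G R f w = (ord V).symm k := by
  unfold winner
  congr 1
  apply le_antisymm
  · exact Finset.min'_le _ _ (by simp [winIdx, hk])
  · apply Finset.le_min'
    intro j hj
    by_contra h
    push_neg at h
    exact hmin j h (by simpa [winIdx] using hj)

lemma winner_spec {R : ℕ} (f : V → Fin (R+1)) (w : V) :
    G.dist (winner G R f w) w ≤ (f (winner G R f w) : ℕ) := by
  have h := Finset.min'_mem (winIdx G R f w) (winIdx_nonempty G R f w)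
  simp only [winIdx, mem_filter, mem_univ, true_and] at h
  exact h

lemma winner_dist (hG : G.Connected) {R : ℕ} (f : V → Fin (R+1)) (u' v' : V)
    (h : winner G R f u' = winner G R f v') :
    G.dist u' v' ≤ 2 * R := by
  have h1 : G.dist (winner G R f u') u' ≤ R :=
    le_trans (winner_spec G f u') (Nat.lt_succ_iff.1 (f _).isLt)
  have h2 : G.dist (winner G R f u') v' ≤ R := by
    rw [h]
    exact le_trans (winner_spec G f v') (Nat.lt_succ_iff.1 (f _).isLt)
  calc G.dist u' v' ≤ G.dist u' (winner G R f u') + G.dist (winner G R f u') v' :=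
        hG.dist_triangle
    _ ≤ R + R := add_le_add (by rwa [SimpleGraph.dist_comm]) h2
    _ = 2 * R := by ring

/-! ### Weights on the product space -/

/-- Product weight on radius assignments. -/
noncomputable def wgt (p : ℝ) (R : ℕ) (f : V → Fin (R+1)) : ℝ :=
  ∏ w : V, gw' p R ((f w) : ℕ)

lemma wgt_nonneg {p : ℝ} (hp0 : 0 ≤ p) (hp1 : p ≤ 1) (R : ℕ) (f : V → Fin (R+1)) :
    0 ≤ wgt p R f :=
  Finset.prod_nonneg fun w _ => gw'_nonneg hp0 hp1 R _

lemma sum_wgt_pi (p : ℝ) (R : ℕ) (T : V → Finset (Fin (R+1))) :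
    ∑ f ∈ Fintype.piFinset T, wgt p R f = ∏ w : V, ∑ x ∈ T w, gw' p R (x:ℕ) :=
  (Finset.prod_univ_sum T fun _ x => gw' p R (x:ℕ)).symm

lemma sum_wgt_total {p : ℝ} (hp0 : p ≠ 0) (R : ℕ) :
    ∑ f : V → Fin (R+1), wgt p R f = 1 := by
  rw [← Fintype.piFinset_univ, sum_wgt_pi]
  rw [Finset.prod_eq_one]
  intro w _
  exact sum_gw_total hp0 R

/-! ### The cut probability bound -/

section CutProof

variable (u v : V) (p : ℝ) (R : ℕ)

/-- `min` of the distances to the two endpoints of the edge. -/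
noncomputable def Avert (c : V) : ℕ := min (G.dist c u) (G.dist c v)

/-- The same, indexed by the enumeration. -/
noncomputable def aIdx (i : ℕ) : ℕ :=
  if h : i < Fintype.card V then Avert G u v ((ord V).symm ⟨i, h⟩) else 0

noncomputable def ellF (i : ℕ) : ℝ :=
  ∑ x ∈ univ.filter (fun x : Fin (R+1) => (x:ℕ) < aIdx G u v i), gw' p R (x:ℕ)

noncomputable def rF (i : ℕ) : ℝ :=
  ∑ x ∈ univ.filter (fun x : Fin (R+1) => ¬ ((x:ℕ) < aIdx G u v i)), gw' p R (x:ℕ)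

noncomputable def emF (i : ℕ) : ℝ :=
  ∑ x ∈ univ.filter (fun x : Fin (R+1) => (x:ℕ) = aIdx G u v i), gw' p R (x:ℕ)

noncomputable def PF (k : ℕ) : ℝ := ∏ i ∈ range k, ellF G u v p R i

/-- The cylinder event: coordinates before `k` are below the threshold, coordinate `k`
is exactly at the threshold. -/
noncomputable def TTF (k : ℕ) (c : V) : Finset (Fin (R+1)) :=
  if ((ord V) c : ℕ) < k then univ.filter (fun x : Fin (R+1) => (x:ℕ) < Avert G u v c)
  else if ((ord V) c : ℕ) = k then
    univ.filter (fun x : Fin (R+1) => (x:ℕ) = Avert G u v c)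
  else univ

noncomputable def FF (k i : ℕ) : ℝ :=
  if i < k then ellF G u v p R i else if i = k then emF G u v p R i else 1

lemma aIdx_coe (j : Fin (Fintype.card V)) :
    aIdx G u v (j : ℕ) = Avert G u v ((ord V).symm j) := by
  simp [aIdx, j.isLt]

lemma ellF_nonneg (hp0 : 0 ≤ p) (hp1 : p ≤ 1) (i : ℕ) : 0 ≤ ellF G u v p R i :=
  Finset.sum_nonneg fun x _ => gw'_nonneg hp0 hp1 R _

lemma rF_nonneg (hp0 : 0 ≤ p) (hp1 : p ≤ 1) (i : ℕ) : 0 ≤ rF G u v p R i :=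
  Finset.sum_nonneg fun x _ => gw'_nonneg hp0 hp1 R _

lemma emF_nonneg (hp0 : 0 ≤ p) (hp1 : p ≤ 1) (i : ℕ) : 0 ≤ emF G u v p R i :=
  Finset.sum_nonneg fun x _ => gw'_nonneg hp0 hp1 R _

lemma ellF_add_rF (hp0 : p ≠ 0) (i : ℕ) :
    ellF G u v p R i + rF G u v p R i = 1 := by
  unfold ellF rF
  rw [Finset.sum_filter_add_sum_filter_not]
  exact sum_gw_total hp0 R

lemma ellF_le_one (hp0 : 0 < p) (hp1 : p ≤ 1) (i : ℕ) : ellF G u v p R i ≤ 1 := by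
  have h := ellF_add_rF G u v p R (ne_of_gt hp0) i
  have h2 := rF_nonneg G u v p R (le_of_lt hp0) hp1 i
  linarith

lemma PF_nonneg (hp0 : 0 ≤ p) (hp1 : p ≤ 1) (k : ℕ) : 0 ≤ PF G u v p R k :=
  Finset.prod_nonneg fun i _ => ellF_nonneg G u v p R hp0 hp1 i

lemma PF_le_one (hp0 : 0 < p) (hp1 : p ≤ 1) (k : ℕ) : PF G u v p R k ≤ 1 :=
  Finset.prod_le_one (fun i _ => ellF_nonneg G u v p R (le_of_lt hp0) hp1 i)
    (fun i _ => ellF_le_one G u v p R hp0 hp1 i)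

/-- The probability of the cylinder event `TTF k` factorizes. -/
lemma sum_wgt_TTF (hp0 : p ≠ 0) {k : ℕ} (hk : k < Fintype.card V) :
    ∑ f ∈ Fintype.piFinset (TTF G u v R k), wgt p R f
      = PF G u v p R k * emF G u v p R k := by
  rw [sum_wgt_pi]
  have h1 : ∀ c : V, ∑ x ∈ TTF G u v R k c, gw' p R (x:ℕ)
      = FF G u v p R k ((ord V) c : ℕ) := by
    intro c
    have ha : aIdx G u v ((ord V) c : ℕ) = Avert G u v c := by
      rw [aIdx_coe]; simp
    unfold TTF FF
    by_cases h : ((ord V) c : ℕ) < k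
    · rw [if_pos h, if_pos h]
      unfold ellF
      rw [ha]
    · rw [if_neg h, if_neg h]
      by_cases h2 : ((ord V) c : ℕ) = k
      · rw [if_pos h2, if_pos h2]
        unfold emF
        rw [ha]
      · rw [if_neg h2, if_neg h2]
        exact sum_gw_total hp0 R
  rw [Finset.prod_congr rfl fun c _ => h1 c]
  rw [Fintype.prod_equiv (ord V) _ (fun j : Fin (Fintype.card V) => FF G u v p R k (j : ℕ))
    (fun c => rfl)]
  rw [Fin.prod_univ_eq_prod_range (fun i => FF G u v p R k i) (Fintype.card V)]
  rw [← Finset.prod_range_mul_prod_Ico _ (show k + 1 ≤ Fintype.card V by omega)]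
  have h2 : ∏ i ∈ Finset.Ico (k+1) (Fintype.card V), FF G u v p R k i = 1 := by
    apply Finset.prod_eq_one
    intro i hi
    rw [mem_Ico] at hi
    unfold FF
    rw [if_neg (by omega), if_neg (by omega)]
  rw [h2, mul_one, Finset.prod_range_succ]
  have h3 : ∏ i ∈ range k, FF G u v p R k i = PF G u v p R k := by
    apply Finset.prod_congr rfl
    intro i hi
    exact if_pos (mem_range.1 hi)
  have h4 : FF G u v p R k k = emF G u v p R k := by
    unfold FF
    rw [if_neg (lt_irrefl k), if_pos rfl]
  rw [h3, h4]

/-- Every radius assignment cutting the edge lies in one of the cylinder events. -/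
lemma cut_subset (hG : G.Connected) (huv : G.Adj u v) (f : V → Fin (R+1))
    (hf : winner G R f u ≠ winner G R f v) :
    ∃ k ∈ range (Fintype.card V), f ∈ Fintype.piFinset (TTF G u v R k) := by
  classical
  set n := Fintype.card V
  set S : Finset (Fin n) := univ.filter
    (fun j : Fin n => Avert G u v ((ord V).symm j) ≤ (f ((ord V).symm j) : ℕ)) with hS
  have hSne : S.Nonempty := by
    refine ⟨ord V u, ?_⟩
    simp only [hS, mem_filter, mem_univ, true_and, Equiv.symm_apply_apply]
    unfold Avert
    simp [SimpleGraph.dist_self]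
  set k0 : Fin n := S.min' hSne with hk0
  have hk0mem : k0 ∈ S := Finset.min'_mem S hSne
  have hk0min : ∀ j : Fin n, j < k0 →
      ¬ (Avert G u v ((ord V).symm j) ≤ (f ((ord V).symm j) : ℕ)) := by
    intro j hj hcon
    have : j ∈ S := by simp [hS, hcon]
    exact absurd (Finset.min'_le S j this) (not_le_of_gt hj)
  -- adjacency: the two distances differ by at most one
  have hd1 : G.dist u v = 1 := (SimpleGraph.dist_eq_one_iff_adj).2 huv
  have hd2 : G.dist v u = 1 := by rw [SimpleGraph.dist_comm]; exact hd1
  have hmax : ∀ c : V, G.dist c u ≤ Avert G u v c + 1 ∧ G.dist c v ≤ Avert G u v c + 1 := by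
    intro c
    have t1 : G.dist c u ≤ G.dist c v + 1 := by
      have := hG.dist_triangle (u := c) (v := v) (w := u)
      rwa [hd2] at this
    have t2 : G.dist c v ≤ G.dist c u + 1 := by
      have := hG.dist_triangle (u := c) (v := u) (w := v)
      rwa [hd1] at this
    unfold Avert
    omega
  refine ⟨(k0 : ℕ), mem_range.2 k0.isLt, ?_⟩
  rw [Fintype.mem_piFinset]
  intro c
  unfold TTF
  rcases lt_trichotomy ((ord V) c : ℕ) (k0 : ℕ) with h | h | h
  · rw [if_pos h]
    simp only [mem_filter, mem_univ, true_and]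
    have hj : (ord V) c < k0 := by exact Fin.lt_def.2 h
    have := hk0min ((ord V) c) hj
    rw [Equiv.symm_apply_apply] at this
    omega
  · rw [if_neg (by omega), if_pos h]
    simp only [mem_filter, mem_univ, true_and]
    have hceq : c = (ord V).symm k0 := by
      have : (ord V) c = k0 := Fin.ext h
      rw [← this, Equiv.symm_apply_apply]
    have hAle : Avert G u v c ≤ (f c : ℕ) := by
      rw [hceq]
      simpa [hS] using hk0mem
    by_contra hne
    have hlt : Avert G u v c + 1 ≤ (f c : ℕ) := by omega
    have hcu : G.dist c u ≤ (f c : ℕ) := le_trans (hmax c).1 hlt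
    have hcv : G.dist c v ≤ (f c : ℕ) := le_trans (hmax c).2 hlt
    have hmin' : ∀ j : Fin n, j < k0 →
        ¬ (G.dist ((ord V).symm j) u ≤ (f ((ord V).symm j) : ℕ)) := by
      intro j hj hcon
      exact hk0min j hj (le_trans (min_le_left _ _) hcon)
    have hmin'' : ∀ j : Fin n, j < k0 →
        ¬ (G.dist ((ord V).symm j) v ≤ (f ((ord V).symm j) : ℕ)) := by
      intro j hj hcon
      exact hk0min j hj (le_trans (min_le_right _ _) hcon)
    have hwu : winner G R f u = (ord V).symm k0 :=
      winner_eq G k0 (by rw [← hceq]; exact hcu) hmin'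
    have hwv : winner G R f v = (ord V).symm k0 :=
      winner_eq G k0 (by rw [← hceq]; exact hcv) hmin''
    exact hf (hwu.trans hwv.symm)
  · rw [if_neg (by omega), if_neg (by omega)]
    exact mem_univ _

lemma cut_bound (hG : G.Connected) (hp0 : 0 < p) (hp1 : p < 1)
    (huv : G.Adj u v) :
    ∑ f ∈ univ.filter (fun f : V → Fin (R+1) => winner G R f u ≠ winner G R f v),
        wgt p R f
      ≤ p + (Fintype.card V : ℝ) * (1 - p) ^ R := by
  classical
  set n := Fintype.card V
  have hp0' : (0:ℝ) ≤ p := le_of_lt hp0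
  have hp1' : p ≤ 1 := le_of_lt hp1
  have hpne : p ≠ 0 := ne_of_gt hp0
  have h1p : (0:ℝ) ≤ 1 - p := by linarith
  -- Step 1 : bound the cut sum by the sum over cylinder events
  have step1 : ∑ f ∈ univ.filter
        (fun f : V → Fin (R+1) => winner G R f u ≠ winner G R f v), wgt p R f
      ≤ ∑ k ∈ range n, ∑ f ∈ Fintype.piFinset (TTF G u v R k), wgt p R f := by
    have h1 : ∀ f ∈ univ.filter
        (fun f : V → Fin (R+1) => winner G R f u ≠ winner G R f v),
        wgt p R f ≤ ∑ k ∈ range n,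
          (if f ∈ Fintype.piFinset (TTF G u v R k) then wgt p R f else 0) := by
      intro f hf
      rw [mem_filter] at hf
      obtain ⟨k, hk, hfk⟩ := cut_subset G u v R hG huv f hf.2
      calc wgt p R f
          = if f ∈ Fintype.piFinset (TTF G u v R k) then wgt p R f else 0 :=
            (if_pos hfk).symm
        _ ≤ ∑ k' ∈ range n,
              (if f ∈ Fintype.piFinset (TTF G u v R k') then wgt p R f else 0) :=
            Finset.single_le_sum
              (f := fun k' => if f ∈ Fintype.piFinset (TTF G u v R k') then wgt p R f else 0)
              (fun k' _ => by
                show (0:ℝ) ≤ if f ∈ Fintype.piFinset (TTF G u v R k') then wgt p R f else 0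
                split
                · exact wgt_nonneg hp0' hp1' R f
                · exact le_refl 0) hk
    calc ∑ f ∈ univ.filter
          (fun f : V → Fin (R+1) => winner G R f u ≠ winner G R f v), wgt p R f
        ≤ ∑ f ∈ univ.filter
          (fun f : V → Fin (R+1) => winner G R f u ≠ winner G R f v),
            ∑ k ∈ range n,
              (if f ∈ Fintype.piFinset (TTF G u v R k) then wgt p R f else 0) :=
          Finset.sum_le_sum h1
      _ ≤ ∑ f : V → Fin (R+1), ∑ k ∈ range n,
              (if f ∈ Fintype.piFinset (TTF G u v R k) then wgt p R f else 0) := by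
          apply Finset.sum_le_sum_of_subset_of_nonneg (Finset.filter_subset _ _)
          intro f _ _
          apply Finset.sum_nonneg
          intro k _
          split
          · exact wgt_nonneg hp0' hp1' R f
          · exact le_refl 0
      _ = ∑ k ∈ range n, ∑ f : V → Fin (R+1),
              (if f ∈ Fintype.piFinset (TTF G u v R k) then wgt p R f else 0) :=
          Finset.sum_comm
      _ = ∑ k ∈ range n, ∑ f ∈ Fintype.piFinset (TTF G u v R k), wgt p R f := by
          apply Finset.sum_congr rfl
          intro k _
          rw [Finset.sum_ite_mem, Finset.univ_inter]
  -- Step 2 : compute each cylinder probability and bound it pointwise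
  have step2 : ∀ k ∈ range n, ∑ f ∈ Fintype.piFinset (TTF G u v R k), wgt p R f
      ≤ p * (PF G u v p R k * rF G u v p R k) + (1 - p) ^ R := by
    intro k hk
    rw [sum_wgt_TTF G u v p R hpne (mem_range.1 hk)]
    have hPF0 := PF_nonneg G u v p R hp0' hp1' k
    have hPF1 := PF_le_one G u v p R hp0 hp1' k
    have hrF0 := rF_nonneg G u v p R hp0' hp1' k
    rcases lt_trichotomy (aIdx G u v k) R with h | h | h
    · -- below the cap : emF = p * rF
      have hm : emF G u v p R k = p * (1 - p) ^ (aIdx G u v k) := by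
        unfold emF
        rw [sum_gw_eq p (le_of_lt h)]
        unfold gw'
        rw [if_pos h]
      have hr : rF G u v p R k = (1 - p) ^ (aIdx G u v k) := by
        unfold rF
        exact sum_gw_ge hpne (le_of_lt h)
      rw [hm, hr]
      have : PF G u v p R k * (p * (1-p) ^ (aIdx G u v k))
          = p * (PF G u v p R k * (1-p) ^ (aIdx G u v k)) := by ring
      rw [this]
      have : (0:ℝ) ≤ (1-p)^R := pow_nonneg h1p R
      linarith
    · -- exactly at the cap : emF = (1-p)^R
      have hm : emF G u v p R k = (1 - p) ^ R := by
        unfold emF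
        rw [h, sum_gw_eq p (le_refl R)]
        unfold gw'
        rw [if_neg (lt_irrefl R)]
      rw [hm]
      have h2 : PF G u v p R k * (1-p)^R ≤ (1-p)^R := by
        have := pow_nonneg h1p R
        nlinarith
      have h3 : (0:ℝ) ≤ p * (PF G u v p R k * rF G u v p R k) := by positivity
      linarith
    · -- above the cap : emF = 0
      have hm : emF G u v p R k = 0 := by
        unfold emF
        exact sum_gw_eq_empty p h
      rw [hm, mul_zero]
      have h2 : (0:ℝ) ≤ (1-p)^R := pow_nonneg h1p R
      have h3 : (0:ℝ) ≤ p * (PF G u v p R k * rF G u v p R k) := by positivity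
      linarith
  -- Step 3 : telescoping
  have step3 : ∑ k ∈ range n, PF G u v p R k * rF G u v p R k ≤ 1 := by
    have h1 : ∀ k, PF G u v p R k * rF G u v p R k
        = PF G u v p R k - PF G u v p R (k+1) := by
      intro k
      have h2 : PF G u v p R (k+1) = PF G u v p R k * ellF G u v p R k :=
        Finset.prod_range_succ _ k
      have h3 : rF G u v p R k = 1 - ellF G u v p R k := by
        have := ellF_add_rF G u v p R hpne k
        linarith
      rw [h2, h3]
      ring
    calc ∑ k ∈ range n, PF G u v p R k * rF G u v p R k
        = ∑ k ∈ range n, (PF G u v p R k - PF G u v p R (k+1)) :=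
          Finset.sum_congr rfl fun k _ => h1 k
      _ = PF G u v p R 0 - PF G u v p R n := Finset.sum_range_sub' _ n
      _ ≤ 1 := by
          have h4 : PF G u v p R 0 = 1 := Finset.prod_range_zero _
          have h5 := PF_nonneg G u v p R hp0' hp1' n
          linarith
  -- combine
  calc ∑ f ∈ univ.filter
        (fun f : V → Fin (R+1) => winner G R f u ≠ winner G R f v), wgt p R f
      ≤ ∑ k ∈ range n, ∑ f ∈ Fintype.piFinset (TTF G u v R k), wgt p R f := step1
    _ ≤ ∑ k ∈ range n, (p * (PF G u v p R k * rF G u v p R k) + (1 - p) ^ R) :=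
        Finset.sum_le_sum step2
    _ = p * (∑ k ∈ range n, PF G u v p R k * rF G u v p R k) + n * (1 - p) ^ R := by
        rw [Finset.sum_add_distrib, Finset.mul_sum, Finset.sum_const, card_range,
          nsmul_eq_mul]
    _ ≤ p * 1 + n * (1 - p) ^ R := by
        have hs0 : (0:ℝ) ≤ (1-p)^R := pow_nonneg h1p R
        have := mul_le_mul_of_nonneg_left step3 (le_of_lt hp0)
        linarith
    _ = p + (n : ℝ) * (1 - p) ^ R := by ring

end CutProof

end LDDaux

/-- Static, unit-weight probabilistic weak low-diameter decomposition: there is a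
constant `C > 0` such that every finite connected simple graph on `n ≥ 2` vertices
admits, for every `β ∈ (0,1)`, a probability distribution over partitions (given as
setoids) of its vertex set in which (i) every partition in the support has all
blocks of weak diameter at most `C * β⁻¹ * (log n)²`, and (ii) every edge has
probability at most `β` of having its endpoints in different blocks. -/
theorem probabilistic_weak_LDD :
    ∃ C : ℝ, 0 < C ∧
      ∀ (V : Type) [Fintype V] (G : SimpleGraph V), G.Connected →
        2 ≤ Fintype.card V →
        ∀ β : ℝ, 0 < β → β < 1 →
          ∃ γ : PMF (Setoid V),
            (∀ s ∈ γ.support, ∀ u v : V, s u v →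
              (G.dist u v : ℝ) ≤ C * β⁻¹ * Real.log (Fintype.card V) ^ 2) ∧
            (∀ u v : V, G.Adj u v →
              γ.toOuterMeasure {s : Setoid V | ¬ s u v} ≤ ENNReal.ofReal β) := by
  classical
  refine ⟨50, by norm_num, ?_⟩
  intro V _ G hconn hcard β hβ0 hβ1
  letI : DecidableEq V := Classical.decEq V
  have hn2 : (2:ℝ) ≤ (Fintype.card V : ℝ) := by exact_mod_cast hcard
  have hlog2 : (0.6931:ℝ) ≤ Real.log 2 := by
    have := Real.log_two_gt_d9; norm_num at this ⊢; linarith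
  have hL2 : Real.log 2 ≤ Real.log (Fintype.card V) :=
    Real.log_le_log (by norm_num) hn2
  have hL0 : (0.6931:ℝ) ≤ Real.log (Fintype.card V) := le_trans hlog2 hL2
  have hβinv_pos : (0:ℝ) < β⁻¹ := inv_pos.2 hβ0
  have hinv1 : (1:ℝ) ≤ β⁻¹ := by
    nlinarith [mul_inv_cancel₀ (ne_of_gt hβ0), hβinv_pos]
  have hdist_card : ∀ u' v' : V, (G.dist u' v' : ℝ) ≤ (Fintype.card V : ℝ) - 1 := by
    intro u' v'
    obtain ⟨w⟩ := hconn u' v'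
    have h1 : G.dist u' v' ≤ w.toPath.1.length := SimpleGraph.dist_le _
    have h2 : w.toPath.1.length < Fintype.card V := w.toPath.2.length_lt
    have h3 : G.dist u' v' ≤ Fintype.card V - 1 := by omega
    calc (G.dist u' v' : ℝ) ≤ ((Fintype.card V - 1 : ℕ) : ℝ) := by exact_mod_cast h3
      _ = (Fintype.card V : ℝ) - 1 := by
          rw [Nat.cast_sub (by omega)]; norm_num
  by_cases hcase : (Fintype.card V : ℝ) - 1 ≤ 50 * β⁻¹ * Real.log (Fintype.card V) ^ 2
  · -- trivial partition suffices
    refine ⟨PMF.pure ⊤, ?_, ?_⟩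
    · intro s hs u' v' _
      exact le_trans (hdist_card u' v') hcase
    · intro u' v' _
      rw [PMF.toOuterMeasure_pure_apply]
      rw [if_neg]
      · exact zero_le
      · simp only [Set.mem_setOf_eq, not_not]
        show (⊤ : Setoid V) u' v'
        rw [Setoid.top_def]
        trivial
  · -- genuine construction
    push_neg at hcase
    set p : ℝ := β/2 with hp_def
    set Rc : ℕ := ⌈(2/β) * Real.log (2*(Fintype.card V)/β)⌉₊ with hRc_def
    have hp0 : 0 < p := by rw [hp_def]; linarith
    have hp1 : p < 1 := by rw [hp_def]; linarith
    have hp0' : (0:ℝ) ≤ p := le_of_lt hp0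
    have hp1' : p ≤ 1 := le_of_lt hp1
    have hpne : p ≠ 0 := ne_of_gt hp0
    have h1p : (0:ℝ) ≤ 1 - p := by linarith
    have hncast_pos : (0:ℝ) < (Fintype.card V : ℝ) := by linarith
    have hβinv_n : β⁻¹ ≤ (Fintype.card V : ℝ) := by
      have h1 : (0:ℝ) ≤ β⁻¹ * (Real.log (Fintype.card V) - 0.6931) :=
        mul_nonneg (le_of_lt hβinv_pos) (sub_nonneg.2 hL0)
      have h2 : (0:ℝ) ≤ (β⁻¹ * (Real.log (Fintype.card V) - 0.6931))
          * (Real.log (Fintype.card V) - 0.6931) :=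
        mul_nonneg h1 (sub_nonneg.2 hL0)
      nlinarith [hcase, hn2, hβinv_pos]
    have hlogβ : Real.log β⁻¹ ≤ Real.log (Fintype.card V) :=
      Real.log_le_log hβinv_pos hβinv_n
    have harg_pos : (0:ℝ) < 2*(Fintype.card V)/β := by positivity
    have hlog_arg : Real.log (2*(Fintype.card V)/β)
        = Real.log 2 + Real.log (Fintype.card V) + Real.log β⁻¹ := by
      rw [div_eq_mul_inv, Real.log_mul (by positivity) (by positivity),
        Real.log_mul (by norm_num) (by positivity)]
    have hlog_arg_le : Real.log (2*(Fintype.card V)/β) ≤ 3 * Real.log (Fintype.card V) := by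
      rw [hlog_arg]; linarith
    have hlog_arg_nonneg : (0:ℝ) ≤ Real.log (2*(Fintype.card V)/β) := by
      rw [hlog_arg]
      have : (0:ℝ) ≤ Real.log β⁻¹ := Real.log_nonneg hinv1
      have h2 : (0:ℝ) ≤ Real.log 2 := by linarith
      have h3 : (0:ℝ) ≤ Real.log (Fintype.card V) := by linarith
      linarith
    have hargR : (2/β) * Real.log (2*(Fintype.card V)/β) ≤ (Rc:ℝ) := Nat.le_ceil _
    have hRup : (Rc:ℝ) ≤ (2/β) * (3*Real.log (Fintype.card V)) + 1 := by
      have h := Nat.ceil_lt_add_one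
        (mul_nonneg (by positivity) hlog_arg_nonneg :
          (0:ℝ) ≤ (2/β) * Real.log (2*(Fintype.card V)/β))
      have h2 : (2/β) * Real.log (2*(Fintype.card V)/β)
          ≤ 2/β * (3*Real.log (Fintype.card V)) :=
        mul_le_mul_of_nonneg_left hlog_arg_le (by positivity)
      rw [hRc_def]
      linarith
    have h2β : (2:ℝ)/β = 2*β⁻¹ := by rw [div_eq_mul_inv]
    have hdiam : (2*(Rc:ℝ)) ≤ 50 * β⁻¹ * Real.log (Fintype.card V) ^2 := by
      rw [h2β] at hRup
      nlinarith [hL0, hinv1, hβinv_pos, hRup,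
        mul_nonneg (sub_nonneg.2 hinv1) (sub_nonneg.2 hL0),
        mul_nonneg (mul_nonneg (sub_nonneg.2 hinv1) (sub_nonneg.2 hL0))
          (sub_nonneg.2 hL0),
        sq_nonneg (Real.log (Fintype.card V) - 0.6931)]
    have hcut : p + (Fintype.card V:ℝ) * (1-p)^Rc ≤ β := by
      have hpR : Real.log (2*(Fintype.card V)/β) ≤ p * Rc := by
        have he : p * ((2/β) * Real.log (2*(Fintype.card V)/β))
            = Real.log (2*(Fintype.card V)/β) := by
          rw [hp_def]; field_simp
        calc Real.log (2*(Fintype.card V)/β)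
            = p * ((2/β) * Real.log (2*(Fintype.card V)/β)) := he.symm
          _ ≤ p * Rc := mul_le_mul_of_nonneg_left hargR hp0'
      have hexp1 : (1-p) ≤ Real.exp (-p) := by
        have := Real.add_one_le_exp (-p); linarith
      have hpow : (1-p)^Rc ≤ Real.exp (-p)^Rc := pow_le_pow_left₀ h1p hexp1 Rc
      have hexp2 : Real.exp (-p)^Rc = Real.exp (-(p*(Rc:ℝ))) := by
        rw [← Real.exp_nat_mul]; congr 1; ring
      have hexp3 : Real.exp (-(p*(Rc:ℝ)))
          ≤ Real.exp (-(Real.log (2*(Fintype.card V)/β))) :=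
        Real.exp_le_exp.2 (by linarith)
      have hexp4 : Real.exp (-(Real.log (2*(Fintype.card V)/β)))
          = β/(2*(Fintype.card V)) := by
        rw [Real.exp_neg, Real.exp_log harg_pos, inv_div]
      have hfin : (1-p)^Rc ≤ β/(2*(Fintype.card V)) := by
        rw [hexp2] at hpow; rw [hexp4] at hexp3; linarith
      have h6 : (Fintype.card V:ℝ) * (1-p)^Rc
          ≤ (Fintype.card V:ℝ)*(β/(2*(Fintype.card V))) :=
        mul_le_mul_of_nonneg_left hfin (le_of_lt hncast_pos)
      have h5 : (Fintype.card V:ℝ)*(β/(2*(Fintype.card V))) = β/2 := by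
        field_simp
      rw [hp_def]
      rw [h5] at h6
      linarith
    have hsum : ∑ f : V → Fin (Rc+1), ENNReal.ofReal (LDDaux.wgt p Rc f) = 1 := by
      rw [← ENNReal.ofReal_sum_of_nonneg
        (fun f _ => LDDaux.wgt_nonneg hp0' hp1' Rc f),
        LDDaux.sum_wgt_total hpne, ENNReal.ofReal_one]
    refine ⟨(PMF.ofFintype (fun f : V → Fin (Rc+1) =>
        ENNReal.ofReal (LDDaux.wgt p Rc f)) hsum).map
          (fun f => Setoid.ker (LDDaux.winner G Rc f)), ?_, ?_⟩
    · intro s hs u' v' hsuv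
      rw [PMF.support_map] at hs
      obtain ⟨f, -, rfl⟩ := hs
      have hw : LDDaux.winner G Rc f u' = LDDaux.winner G Rc f v' :=
        Setoid.ker_def.1 hsuv
      have hd := LDDaux.winner_dist G hconn f u' v' hw
      calc (G.dist u' v' : ℝ) ≤ ((2*Rc : ℕ) : ℝ) := by exact_mod_cast hd
        _ = 2*(Rc:ℝ) := by push_cast; ring
        _ ≤ 50 * β⁻¹ * Real.log (Fintype.card V) ^2 := hdiam
    · intro u' v' hadj
      rw [PMF.toOuterMeasure_map_apply]
      have hpre : (fun f => Setoid.ker (LDDaux.winner G Rc f)) ⁻¹'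
            {s : Setoid V | ¬ s u' v'}
          = ↑(Finset.univ.filter (fun f : V → Fin (Rc+1) =>
              LDDaux.winner G Rc f u' ≠ LDDaux.winner G Rc f v')) := by
        ext f
        simp [Setoid.ker_def]
      rw [hpre, PMF.toOuterMeasure_apply_finset]
      have heq : ∑ f ∈ Finset.univ.filter (fun f : V → Fin (Rc+1) =>
            LDDaux.winner G Rc f u' ≠ LDDaux.winner G Rc f v'),
            (PMF.ofFintype (fun f : V → Fin (Rc+1) =>
              ENNReal.ofReal (LDDaux.wgt p Rc f)) hsum) f
          = ENNReal.ofReal (∑ f ∈ Finset.univ.filter (fun f : V → Fin (Rc+1) =>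
              LDDaux.winner G Rc f u' ≠ LDDaux.winner G Rc f v'),
                LDDaux.wgt p Rc f) := by
        rw [ENNReal.ofReal_sum_of_nonneg
          (fun f _ => LDDaux.wgt_nonneg hp0' hp1' Rc f)]
        rfl
      rw [heq]
      exact ENNReal.ofReal_le_ofReal
        (le_trans (LDDaux.cut_bound G u' v' p Rc hconn hp0 hp1 hadj) hcut)
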